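/- Let C be a binary orthogonal array of parameters (n, M, τ) with 1 ≤ τ ≤ n − 1 and n ≥ 2, and let w = (w_0, …, w_n) be its distance distribution with respect to the zero vector. Then there exist a tuple w′ ∈ W(n−1, M, τ) and nonnegative integers x_0 = 0, x_1, …, x_n and y_0, y_1, …, y_{n−1}, y_n = 0 such that x_i + y_i = w_i for i = 1, …, n−1, x_{i+1} + y_i = w′_i for i = 0, …, n−1, y_0 = w_0, and x_n = w_n. -/

import Mathlib

/-- A binary orthogonal array of parameters (n, M, τ): an M × n matrix over ZMod 2
such that for every set of τ distinct columns and every tuple of values,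
exactly M / 2^τ rows agree with those values on those columns. -/
def IsBOA (n M τ : ℕ) (C : Fin M → (Fin n → ZMod 2)) : Prop :=
  ∀ S : Finset (Fin n), S.card = τ →
    ∀ v : Fin n → ZMod 2,
      (Finset.univ.filter (fun r => ∀ j ∈ S, C r j = v j)).card = M / 2 ^ τ

/-- The i-th entry of the distance distribution of the array `C` with respect to
the point `c`: the number of rows of `C` at Hamming distance `i` from `c`. -/
def distDist {ι : Type} [Fintype ι] {n : ℕ} (C : ι → (Fin n → ZMod 2))
    (c : Fin n → ZMod 2) (i : ℕ) : ℕ :=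
  (Finset.univ.filter (fun r => hammingDist (C r) c = i)).card


/-- `W n M τ` is the set of (n+1)-tuples arising as the distance distribution of some
(n, M, τ) binary orthogonal array with respect to some point of the Hamming space. -/
def W (n M τ : ℕ) : Set (Fin (n + 1) → ℕ) :=
  {w | ∃ (C : Fin M → (Fin n → ZMod 2)) (c : Fin n → ZMod 2),
        IsBOA n M τ C ∧ ∀ i : Fin (n + 1), w i = distDist C c (i : ℕ)}

theorem stmt_6 (n M τ : ℕ) (hτ1 : 1 ≤ τ) (hτ2 : τ ≤ n) (hn : 1 ≤ n)
    (C : Fin M → (Fin (n + 1) → ZMod 2)) (hC : IsBOA (n + 1) M τ C)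
    (w : ℕ → ℕ) (hw : ∀ i, w i = distDist C 0 i) :
    ∃ w' ∈ W n M τ, ∃ x y : ℕ → ℕ,
      x 0 = 0 ∧ y (n + 1) = 0 ∧
      (∀ i, 1 ≤ i → i ≤ n → x i + y i = w i) ∧
      (∀ i (hi : i ≤ n), x (i + 1) + y i = w' ⟨i, by omega⟩) ∧
      y 0 = w 0 ∧ x (n + 1) = w (n + 1) := by
  classical
  set D : Fin M → Fin n → ZMod 2 := fun r j => C r (Fin.castSucc j) with hD
  have key : ∀ r, hammingDist (C r) 0
      = hammingDist (D r) 0 + (if C r (Fin.last n) = 0 then 0 else 1) := by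
    intro r
    simp only [hammingDist, hD]
    rw [Finset.card_filter, Finset.card_filter, Fin.sum_univ_castSucc]
    simp
  have hzo : ∀ r, C r (Fin.last n) = 0 ∨ C r (Fin.last n) = 1 := by
    intro r
    generalize C r (Fin.last n) = a
    revert a; decide
  have hDBOA : IsBOA n M τ D := by
    intro S hS v
    have hinj : Function.Injective (Fin.castSucc : Fin n → Fin (n+1)) :=
      Fin.castSucc_injective n
    set S' : Finset (Fin (n+1)) := S.map ⟨Fin.castSucc, hinj⟩ with hS'
    set v' : Fin (n+1) → ZMod 2 := fun j => if h : (j : ℕ) < n then v ⟨j, h⟩ else 0 with hv'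
    have := hC S' (by simp [hS', hS]) v'
    rw [← this]
    congr 1
    apply Finset.filter_congr
    intro r _
    constructor
    · intro h j hj
      simp only [hS', Finset.mem_map, Function.Embedding.coeFn_mk] at hj
      obtain ⟨j0, hj0, rfl⟩ := hj
      have := h j0 hj0
      simpa [hv', hD] using this
    · intro h j hj
      have := h (Fin.castSucc j) (Finset.mem_map_of_mem _ hj)
      simpa [hv', hD] using this
  set x : ℕ → ℕ := fun i =>
    (Finset.univ.filter (fun r => hammingDist (C r) 0 = i ∧ C r (Fin.last n) = 1)).card with hx
  set y : ℕ → ℕ := fun i =>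
    (Finset.univ.filter (fun r => hammingDist (C r) 0 = i ∧ C r (Fin.last n) = 0)).card with hy
  have hsplit : ∀ i, x i + y i = w i := by
    intro i
    rw [hw i, distDist, hx, hy]
    simp only [Finset.card_filter]
    rw [← Finset.sum_add_distrib]
    apply Finset.sum_congr rfl
    intro r _
    rcases hzo r with h | h <;>
      simp only [h] <;> norm_num <;> congr
  have hw' : ∀ i, x (i + 1) + y i = distDist D 0 i := by
    intro i
    rw [distDist, hx, hy]
    simp only [Finset.card_filter]
    rw [← Finset.sum_add_distrib]
    apply Finset.sum_congr rfl
    intro r _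
    have hk := key r
    rcases hzo r with h | h <;> simp only [h] at hk ⊢ <;> norm_num at hk ⊢ <;>
      (rw [hk]; by_cases hh : hammingNorm (D r) = i <;> simp [hh])
  have hx0 : x 0 = 0 := by
    rw [hx]
    rw [Finset.card_eq_zero, Finset.filter_eq_empty_iff]
    rintro r _ ⟨h0, h1⟩
    have hk := key r
    rw [h0, h1] at hk
    norm_num at hk
  have hyn : y (n + 1) = 0 := by
    rw [hy]
    rw [Finset.card_eq_zero, Finset.filter_eq_empty_iff]
    rintro r _ ⟨h0, h1⟩
    have hk := key r
    rw [h0, h1] at hk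
    norm_num at hk
    have := hammingDist_le_card_fintype (x := D r) (y := (0 : Fin n → ZMod 2))
    simp at this
    omega
  refine ⟨fun i => distDist D 0 (i : ℕ), ⟨D, 0, hDBOA, fun i => rfl⟩, x, y, hx0, hyn,
    fun i _ _ => hsplit i, fun i hi => hw' i, ?_, ?_⟩
  · have := hsplit 0; omega
  · have := hsplit (n + 1); omega
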